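/- Let A be a prime differential ring with derivation D and let a, b ∈ A. Among all pairs (i, j) of nonnegative integers with D^i(a)·D^j(b) ≠ 0, choose one minimizing i + j, and among those choose one with minimal j. Then j = 0, i.e., D^i(a)·b ≠ 0 for some i. -/

import Mathlib

/-- An ideal of a differential ring is a differential ideal if it is closed under
the derivation. -/
def IsDifferentialIdeal {A : Type*} [Ring A] (D : A → A) (I : Ideal A) : Prop :=
  ∀ a ∈ I, D a ∈ I

/-- A differential ring is prime if the product of any two nonzero differential
ideals is nonzero. -/
def IsPrimeDifferentialRing {A : Type*} [Ring A] (D : A → A) : Prop :=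
  ∀ I J : Ideal A, IsDifferentialIdeal D I → IsDifferentialIdeal D J →
    I ≠ ⊥ → J ≠ ⊥ → I * J ≠ ⊥

/-- in a prime differential ring, if `(i, j)` is chosen among the pairs
with `D^i(a)·D^j(b) ≠ 0` so as to minimize `i + j`, and among those with minimal `j`,
then `j = 0`. -/
theorem minimal_pair_has_j_eq_zero {A : Type*} [Ring A] (D : A → A)
    (hadd : ∀ a b : A, D (a + b) = D a + D b)
    (hLeib : ∀ a b : A, D (a * b) = a * D b + D a * b)
    (hprime : IsPrimeDifferentialRing D)
    (a b : A) (i j : ℕ)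
    (hij : D^[i] a * D^[j] b ≠ 0)
    (hmin_sum : ∀ i' j' : ℕ, D^[i'] a * D^[j'] b ≠ 0 → i + j ≤ i' + j')
    (hmin_j : ∀ i' j' : ℕ, D^[i'] a * D^[j'] b ≠ 0 → i' + j' = i + j → j ≤ j') :
    j = 0 := by
  by_contra hj
  obtain ⟨k, rfl⟩ : ∃ k, j = k + 1 :=
    ⟨j - 1, (Nat.succ_pred_eq_of_pos (Nat.pos_of_ne_zero hj)).symm⟩
  have hD0 : D 0 = 0 := by
    have h := hadd 0 0
    simp only [add_zero] at h
    exact right_eq_add.mp h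
  have hzero : D^[i] a * D^[k] b = 0 := by
    by_contra h
    have := hmin_sum i k h
    omega
  have hsum : D^[i] a * D^[k+1] b + D^[i+1] a * D^[k] b = 0 := by
    have := hLeib (D^[i] a) (D^[k] b)
    rw [hzero, hD0] at this
    rw [Function.iterate_succ_apply' D k b, Function.iterate_succ_apply' D i a]
    exact this.symm
  have hne : D^[i+1] a * D^[k] b ≠ 0 := by
    intro h
    rw [h, add_zero] at hsum
    exact hij hsum
  have := hmin_j (i+1) k hne (by omega)
  omega
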